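/- Let a₁, a₂, a₃ ∈ ℂ ∖ {0}. Then the set of b ∈ ℂ such that the polynomial f_b(x,y) = a₁·x + a₂·x²·y + a₃·y² + b·x·y has a singular point in (ℂ ∖ {0})² has exactly 3 elements; moreover, for each such b the singular point in (ℂ ∖ {0})² is unique and is nondegenerate, i.e. the determinant of the Hessian matrix of f_b at that point is nonzero. -/

import Mathlib

open MvPolynomial

noncomputable section

/-- `p` is a singular point of `h` lying in the torus `(ℂ ∖ {0})²`. -/
def SingularAt2 (h : MvPolynomial (Fin 2) ℂ) (p : Fin 2 → ℂ) : Prop :=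
  (∀ i, p i ≠ 0) ∧ eval p h = 0 ∧ ∀ i : Fin 2, eval p (pderiv i h) = 0

/-- Determinant of the Hessian matrix of a polynomial in two variables at `p`. -/
def hessDet2 (h : MvPolynomial (Fin 2) ℂ) (p : Fin 2 → ℂ) : ℂ :=
  Matrix.det (Matrix.of fun i j : Fin 2 => eval p (pderiv i (pderiv j h)))

/-- The circuit-C polynomial `a₁·x + a₂·x²y + a₃·y² + b·xy`. -/
def circuitC (a1 a2 a3 b : ℂ) : MvPolynomial (Fin 2) ℂ :=
  C a1 * X 0 + C a2 * X 0 ^ 2 * X 1 + C a3 * X 1 ^ 2 + C b * X 0 * X 1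

lemma circuitC_eval (a1 a2 a3 b : ℂ) (p : Fin 2 → ℂ) :
    eval p (circuitC a1 a2 a3 b)
      = a1*(p 0) + a2*(p 0)^2*(p 1) + a3*(p 1)^2 + b*(p 0)*(p 1) := by
  simp [circuitC]

lemma circuitC_evald0 (a1 a2 a3 b : ℂ) (p : Fin 2 → ℂ) :
    eval p (pderiv 0 (circuitC a1 a2 a3 b)) = a1 + 2*a2*(p 0)*(p 1) + b*(p 1) := by
  simp [circuitC, pderiv_mul, pderiv_pow, pderiv_X]; ring

lemma circuitC_evald1 (a1 a2 a3 b : ℂ) (p : Fin 2 → ℂ) :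
    eval p (pderiv 1 (circuitC a1 a2 a3 b)) = a2*(p 0)^2 + 2*a3*(p 1) + b*(p 0) := by
  simp [circuitC, pderiv_mul, pderiv_pow, pderiv_X]; ring

lemma pderiv_two' (i : Fin 2) : pderiv i (2 : MvPolynomial (Fin 2) ℂ) = 0 := by
  have : (2 : MvPolynomial (Fin 2) ℂ) = ((2:ℕ) : MvPolynomial (Fin 2) ℂ) := by norm_num
  rw [this, Derivation.map_natCast]

lemma circuitC_hess (a1 a2 a3 b : ℂ) (p : Fin 2 → ℂ) :
    hessDet2 (circuitC a1 a2 a3 b) p = 4*a2*a3*(p 1) - (2*a2*(p 0)+b)^2 := by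
  rw [hessDet2, Matrix.det_fin_two]
  simp [circuitC, pderiv_mul, pderiv_pow, pderiv_X, pderiv_two']
  ring

/-- Forward analysis of a singular point. -/
lemma sing_analyze (a1 a2 a3 b : ℂ) (h1 : a1 ≠ 0) (h2 : a2 ≠ 0) (_h3 : a3 ≠ 0)
    (p : Fin 2 → ℂ) (hs : SingularAt2 (circuitC a1 a2 a3 b) p) :
    b ≠ 0 ∧ p 0 = -b/(3*a2) ∧ p 1 = -3*a1/b ∧ b^3 = -27*a1*a2*a3 := by
  obtain ⟨hnz, hf, hd⟩ := hs
  have hx : p 0 ≠ 0 := hnz 0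
  rw [circuitC_eval] at hf
  have hE1 := hd 0
  have hE2 := hd 1
  rw [circuitC_evald0] at hE1
  rw [circuitC_evald1] at hE2
  have hxy : a2 * p 0 * p 1 = a1 := by
    have h4 : p 0 * (a2 * p 0 * p 1 - a1) = 0 := by
      linear_combination (p 0)*hE1 + (p 1)*hE2 - 2*hf
    rcases mul_eq_zero.1 h4 with h | h
    · exact absurd h hx
    · linear_combination h
  have hby : b * p 1 = -3*a1 := by linear_combination hE1 - 2*hxy
  have hb : b ≠ 0 := by
    rintro rfl
    exact h1 (by linear_combination hby / 3)
  have h3x : 3*a2*(p 0) = -b := by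
    have h5 : a1*(3*a2*(p 0) + b) = 0 := by linear_combination a2*(p 0)*hby - b*hxy
    have := (mul_eq_zero.1 h5).resolve_left h1
    linear_combination this
  have hcube : b^3 = -27*a1*a2*a3 := by
    linear_combination (-(9*a2*b)/2) * hE2 + ((3*a2*b*(p 0) + 2*b^2)/2) * h3x
      + (9*a2*a3) * hby
  refine ⟨hb, ?_, ?_, hcube⟩
  · field_simp
    linear_combination h3x
  · field_simp
    linear_combination hby

/-- Backward: explicit singular point. -/
lemma sing_exists (a1 a2 a3 b : ℂ) (h1 : a1 ≠ 0) (h2 : a2 ≠ 0) (_h3 : a3 ≠ 0)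
    (hb : b ≠ 0) (hc : b^3 = -27*a1*a2*a3) :
    SingularAt2 (circuitC a1 a2 a3 b) ![-b/(3*a2), -3*a1/b] := by
  set q : Fin 2 → ℂ := ![-b/(3*a2), -3*a1/b] with hq
  have hq0 : q 0 = -b/(3*a2) := rfl
  have hq1 : q 1 = -3*a1/b := rfl
  have h3x : 3*a2*(q 0) = -b := by rw [hq0]; field_simp
  have hyb : b*(q 1) = -3*a1 := by rw [hq1]; field_simp
  have hcoef : (3*a2*b^2 : ℂ) ≠ 0 := by simp [h2, hb]
  have hcoef2 : (9*a2*b : ℂ) ≠ 0 := by simp [h2, hb]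
  have hcoef1 : (3*b : ℂ) ≠ 0 := by simp [hb]
  refine ⟨?_, ?_, ?_⟩
  · intro i
    fin_cases i <;> simp [hb, h1, h2, hq]
  · rw [circuitC_eval]
    have hT : (3*a2*b^2) * (a1*(q 0) + a2*(q 0)^2*(q 1) + a3*(q 1)^2 + b*(q 0)*(q 1)) = 0 := by
      linear_combination (2*a1*b^2 + a2*b^2*(q 0)*(q 1) + b^3*(q 1)) * h3x
        + (3*a2*a3*(q 1)*b - a2*b^2*(q 0) - 9*a1*a2*a3 - b^3) * hyb + a1 * hc
    exact (mul_eq_zero.1 hT).resolve_left hcoef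
  · have d0 : eval q (pderiv 0 (circuitC a1 a2 a3 b)) = 0 := by
      rw [circuitC_evald0]
      have hT : (3*b) * (a1 + 2*a2*(q 0)*(q 1) + b*(q 1)) = 0 := by
        linear_combination (2*(q 1)*b)*h3x + b*hyb
      exact (mul_eq_zero.1 hT).resolve_left hcoef1
    have d1 : eval q (pderiv 1 (circuitC a1 a2 a3 b)) = 0 := by
      rw [circuitC_evald1]
      have hT : (9*a2*b) * (a2*(q 0)^2 + 2*a3*(q 1) + b*(q 0)) = 0 := by
        linear_combination (3*a2*b*(q 0)+2*b^2)*h3x + 18*a2*a3*hyb - 2*hc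
      exact (mul_eq_zero.1 hT).resolve_left hcoef2
    intro i
    fin_cases i
    · exact d0
    · exact d1

lemma cube_set_card (c : ℂ) (hc : c ≠ 0) :
    {b : ℂ | b ^ 3 = c}.Finite ∧ {b : ℂ | b ^ 3 = c}.ncard = 3 := by
  have hζ : IsPrimitiveRoot (Complex.exp (2 * Real.pi * Complex.I / (3:ℕ))) 3 :=
    Complex.isPrimitiveRoot_exp 3 (by norm_num)
  have hset : {b : ℂ | b ^ 3 = c} = ((Polynomial.nthRoots 3 c).toFinset : Set ℂ) := by
    ext b
    simp [Polynomial.mem_nthRoots (by norm_num : 0 < 3)]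
  have hnodup : (Polynomial.nthRoots 3 c).Nodup := hζ.nthRoots_nodup hc
  have hcard : Multiset.card (Polynomial.nthRoots 3 c) = 3 := by
    rw [hζ.card_nthRoots, if_pos (IsAlgClosed.exists_pow_nat_eq c (by norm_num : 0 < 3))]
  constructor
  · rw [hset]; exact (Polynomial.nthRoots 3 c).toFinset.finite_toSet
  · rw [hset, Set.ncard_coe_finset, Multiset.toFinset_card_of_nodup hnodup, hcard]

theorem circuitC_count (a1 a2 a3 : ℂ) (h1 : a1 ≠ 0) (h2 : a2 ≠ 0) (h3 : a3 ≠ 0) :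
    {b : ℂ | ∃ p : Fin 2 → ℂ, SingularAt2 (circuitC a1 a2 a3 b) p}.Finite ∧
    {b : ℂ | ∃ p : Fin 2 → ℂ, SingularAt2 (circuitC a1 a2 a3 b) p}.ncard = 3 ∧
    ∀ b : ℂ, ∀ p : Fin 2 → ℂ, SingularAt2 (circuitC a1 a2 a3 b) p →
      (∀ q : Fin 2 → ℂ, SingularAt2 (circuitC a1 a2 a3 b) q → q = p) ∧
      hessDet2 (circuitC a1 a2 a3 b) p ≠ 0 := by
  have hcne : (-27*a1*a2*a3 : ℂ) ≠ 0 := by simp [h1, h2, h3]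
  have hset : {b : ℂ | ∃ p : Fin 2 → ℂ, SingularAt2 (circuitC a1 a2 a3 b) p}
      = {b : ℂ | b ^ 3 = -27*a1*a2*a3} := by
    ext b
    constructor
    · rintro ⟨p, hp⟩
      exact (sing_analyze a1 a2 a3 b h1 h2 h3 p hp).2.2.2
    · intro hb3
      have hb : b ≠ 0 := by
        rintro rfl
        exact hcne (by simpa using hb3.symm)
      exact ⟨_, sing_exists a1 a2 a3 b h1 h2 h3 hb hb3⟩
  obtain ⟨hfin, hcard⟩ := cube_set_card (-27*a1*a2*a3) hcne
  refine ⟨hset ▸ hfin, hset ▸ hcard, ?_⟩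
  intro b p hp
  obtain ⟨hb, hp0, hp1, hc⟩ := sing_analyze a1 a2 a3 b h1 h2 h3 p hp
  constructor
  · intro q hq
    obtain ⟨_, hq0, hq1, _⟩ := sing_analyze a1 a2 a3 b h1 h2 h3 q hq
    funext i
    fin_cases i
    · exact hq0.trans hp0.symm
    · exact hq1.trans hp1.symm
  · have hval : hessDet2 (circuitC a1 a2 a3 b) p = b^2/3 := by
      rw [circuitC_hess, hp0, hp1]
      field_simp
      linear_combination (-4 : ℂ) * hc
    rw [hval]
    simp [hb]

end
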